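/- In a finite MDP with bisimulation metric d̃ as the fixed point of F(d)(s_i,s_j) = max_a [(1−c)|R^a_{s_i} − R^a_{s_j}| + c·W₁(d)(P^a_{s_i}, P^a_{s_j})], c ∈ (0,1), if d̃(s_i, s_j) = 0, then for every action a and every subset G of the zero-distance equivalence class partition, P(G|s_i,a) = P(G|s_j,a). That is, the kernel of d̃ is a bisimulation relation. -/
import Mathlib

open Finset

structure IsPseudometric {S : Type*} (d : S → S → ℝ) : Prop where
  nonneg : ∀ x y, 0 ≤ d x y
  refl : ∀ x, d x x = 0
  symm : ∀ x y, d x y = d y x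
  triangle : ∀ x y z, d x z ≤ d x y + d y z

def IsProb {S : Type*} [Fintype S] (p : S → ℝ) : Prop :=
  (∀ s, 0 ≤ p s) ∧ ∑ s, p s = 1

def IsCoupling {S : Type*} [Fintype S] (γ : S → S → ℝ) (p q : S → ℝ) : Prop :=
  (∀ x y, 0 ≤ γ x y) ∧ (∀ x, ∑ y, γ x y = p x) ∧ (∀ y, ∑ x, γ x y = q y)

noncomputable def W1 {S : Type*} [Fintype S] (d : S → S → ℝ) (p q : S → ℝ) : ℝ :=
  sInf { r | ∃ γ : S → S → ℝ, IsCoupling γ p q ∧ r = ∑ x, ∑ y, d x y * γ x y }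

noncomputable def bisimF {S : Type*} [Fintype S] (R : S → ℝ) (P : S → S → ℝ) (c : ℝ)
    (d : S → S → ℝ) : S → S → ℝ :=
  fun x y => (1 - c) * |R x - R y| + c * W1 d (P x) (P y)

noncomputable def bisimFA {S A : Type*} [Fintype S] [Fintype A] [Nonempty A]
    (R : S → A → ℝ) (P : S → A → S → ℝ) (c : ℝ) (d : S → S → ℝ) : S → S → ℝ :=
  fun x y => ⨆ a : A, ((1 - c) * |R x a - R y a| + c * W1 d (P x a) (P y a))

-- auxiliary lemmas

lemma coupling_exists {S : Type*} [Fintype S] {p q : S → ℝ} (hp : IsProb p) (hq : IsProb q) :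
    ∃ γ : S → S → ℝ, IsCoupling γ p q := by
  refine ⟨fun x y => p x * q y, fun x y => mul_nonneg (hp.1 x) (hq.1 y), ?_, ?_⟩
  · intro x; rw [← Finset.mul_sum, hq.2, mul_one]
  · intro y; simp_rw [← Finset.sum_mul, hp.2, one_mul]

lemma W1_set_nonempty {S : Type*} [Fintype S] (d : S → S → ℝ) {p q : S → ℝ}
    (hp : IsProb p) (hq : IsProb q) :
    { r | ∃ γ : S → S → ℝ, IsCoupling γ p q ∧ r = ∑ x, ∑ y, d x y * γ x y }.Nonempty := by
  obtain ⟨γ, hγ⟩ := coupling_exists hp hq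
  exact ⟨_, γ, hγ, rfl⟩

lemma W1_nonneg {S : Type*} [Fintype S] {d : S → S → ℝ} (hd : ∀ x y, 0 ≤ d x y)
    {p q : S → ℝ} (hp : IsProb p) (hq : IsProb q) : 0 ≤ W1 d p q := by
  apply le_csInf (W1_set_nonempty d hp hq)
  rintro r ⟨γ, hγ, rfl⟩
  exact Finset.sum_nonneg fun x _ => Finset.sum_nonneg fun y _ =>
    mul_nonneg (hd x y) (hγ.1 x y)

/-- the kernel of the bisimulation metric is a bisimulation relation:
states at distance zero assign equal probability to every zero-distance equivalence
class, for every action. -/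
theorem stmt_14 {S A : Type*} [Fintype S] [Fintype A] [Nonempty A]
    (R : S → A → ℝ) (P : S → A → S → ℝ) (hP : ∀ s a, IsProb (P s a))
    (c : ℝ) (hc0 : 0 < c) (hc1 : c < 1)
    (dt : S → S → ℝ) (hdt : IsPseudometric dt) (hfix : bisimFA R P c dt = dt)
    (s_i s_j : S) (h0 : dt s_i s_j = 0) :
    ∀ (a : A) (z : S),
      ∑ s' ∈ univ.filter (fun s' => dt z s' = 0), P s_i a s' =
        ∑ s' ∈ univ.filter (fun s' => dt z s' = 0), P s_j a s' := by
  -- Step 1: W1 dt (P s_i a) (P s_j a) = 0 for every a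
  have hW : ∀ a : A, W1 dt (P s_i a) (P s_j a) = 0 := by
    intro a
    have hsup : bisimFA R P c dt s_i s_j = 0 := by rw [hfix]; exact h0
    set g : A → ℝ := fun a => (1 - c) * |R s_i a - R s_j a| + c * W1 dt (P s_i a) (P s_j a)
      with hg
    have hgnn : ∀ a, 0 ≤ g a := fun a =>
      add_nonneg (mul_nonneg (by linarith) (abs_nonneg _))
        (mul_nonneg hc0.le (W1_nonneg hdt.nonneg (hP s_i a) (hP s_j a)))
    have hbdd : BddAbove (Set.range g) := (Set.finite_range g).bddAbove
    have hle : g a ≤ 0 := hsup ▸ le_ciSup hbdd a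
    have hga : g a = 0 := le_antisymm hle (hgnn a)
    have h1 : 0 ≤ (1 - c) * |R s_i a - R s_j a| := mul_nonneg (by linarith) (abs_nonneg _)
    have h2 : 0 ≤ c * W1 dt (P s_i a) (P s_j a) :=
      mul_nonneg hc0.le (W1_nonneg hdt.nonneg (hP s_i a) (hP s_j a))
    have : c * W1 dt (P s_i a) (P s_j a) = 0 := by
      have := hg ▸ hga; linarith [this]
    exact (mul_eq_zero.1 this).resolve_left hc0.ne'
  intro a z
  set p := P s_i a with hp
  set q := P s_j a with hq
  set G : Finset S := univ.filter (fun s' => dt z s' = 0) with hG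
  set Gc : Finset S := univ.filter (fun s' => ¬ dt z s' = 0) with hGc
  by_cases hE : Gc = ∅
  · -- G = univ, both sums are 1
    have hGu : G = univ := by
      rw [hG]
      apply Finset.filter_true_of_mem
      intro s' _
      by_contra hne
      have : s' ∈ Gc := by rw [hGc]; simp [hne]
      simp [hE] at this
    rw [hGu]
    rw [(hP s_i a).2, (hP s_j a).2]
  · have hGcne : Gc.Nonempty := Finset.nonempty_of_ne_empty hE
    set δ : ℝ := Gc.inf' hGcne (fun s' => dt z s') with hδ
    have hδpos : 0 < δ := by
      rw [hδ, Finset.lt_inf'_iff]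
      intro b hb
      have hb' : ¬ dt z b = 0 := by
        rw [hGc] at hb; exact (Finset.mem_filter.1 hb).2
      exact lt_of_le_of_ne (hdt.nonneg z b) (Ne.symm hb')
    -- key bound for any coupling
    have key : ∀ γ : S → S → ℝ, IsCoupling γ p q →
        |∑ x ∈ G, p x - ∑ y ∈ G, q y| ≤ (∑ x, ∑ y, dt x y * γ x y) / δ := by
      intro γ ⟨hγnn, hγp, hγq⟩
      set cost := ∑ x, ∑ y, dt x y * γ x y with hcost
      have hcostnn : ∀ x y, 0 ≤ dt x y * γ x y := fun x y =>
        mul_nonneg (hdt.nonneg x y) (hγnn x y)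
      -- p(G) = A + B, q(G) = A + C
      have hsplit : ∀ f : S → ℝ, ∑ y, f y = ∑ y ∈ G, f y + ∑ y ∈ Gc, f y := by
        intro f
        rw [hG, hGc]
        exact (Finset.sum_filter_add_sum_filter_not univ _ f).symm
      have hpG : ∑ x ∈ G, p x = (∑ x ∈ G, ∑ y ∈ G, γ x y) + ∑ x ∈ G, ∑ y ∈ Gc, γ x y := by
        rw [← Finset.sum_add_distrib]
        exact Finset.sum_congr rfl fun x _ => by rw [← hγp x, hsplit]
      have hqG : ∑ y ∈ G, q y = (∑ x ∈ G, ∑ y ∈ G, γ x y) + ∑ y ∈ G, ∑ x ∈ Gc, γ x y := by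
        rw [Finset.sum_comm]
        rw [← Finset.sum_add_distrib]
        refine Finset.sum_congr rfl fun y _ => ?_
        rw [← hγq y, hsplit]
      set B := ∑ x ∈ G, ∑ y ∈ Gc, γ x y with hB
      set C := ∑ y ∈ G, ∑ x ∈ Gc, γ x y with hC
      have hBnn : 0 ≤ B := Finset.sum_nonneg fun x _ => Finset.sum_nonneg fun y _ => hγnn x y
      have hCnn : 0 ≤ C := Finset.sum_nonneg fun y _ => Finset.sum_nonneg fun x _ => hγnn x y
      have hdiff : ∑ x ∈ G, p x - ∑ y ∈ G, q y = B - C := by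
        rw [hpG, hqG]; ring
      -- distances: x ∈ G, y ∈ Gc ⇒ δ ≤ dt x y
      have hdist : ∀ x ∈ G, ∀ y ∈ Gc, δ ≤ dt x y := by
        intro x hx y hy
        have hx0 : dt z x = 0 := by rw [hG] at hx; exact (Finset.mem_filter.1 hx).2
        have hzy : δ ≤ dt z y := Finset.inf'_le _ hy
        calc δ ≤ dt z y := hzy
          _ ≤ dt z x + dt x y := hdt.triangle z x y
          _ = dt x y := by rw [hx0, zero_add]
      -- δ * B ≤ cost
      have hsub : ∀ (T : Finset (S × S)), (∑ t ∈ T, dt t.1 t.2 * γ t.1 t.2) ≤ cost := by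
        intro T
        rw [hcost, ← Finset.sum_product']
        exact Finset.sum_le_sum_of_subset_of_nonneg (Finset.subset_univ T)
          (fun t _ _ => hcostnn t.1 t.2)
      have hδB : δ * B ≤ cost := by
        have h1 : δ * B ≤ ∑ t ∈ G ×ˢ Gc, dt t.1 t.2 * γ t.1 t.2 := by
          rw [hB, Finset.mul_sum]
          rw [Finset.sum_product]
          refine Finset.sum_le_sum fun x hx => ?_
          rw [Finset.mul_sum]
          refine Finset.sum_le_sum fun y hy => ?_
          exact mul_le_mul_of_nonneg_right (hdist x hx y hy) (hγnn x y)
        exact h1.trans (hsub _)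
      have hδC : δ * C ≤ cost := by
        have h1 : δ * C ≤ ∑ y ∈ G, ∑ x ∈ Gc, dt x y * γ x y := by
          rw [hC, Finset.mul_sum]
          refine Finset.sum_le_sum fun y hy => ?_
          rw [Finset.mul_sum]
          refine Finset.sum_le_sum fun x hx => ?_
          have hd : δ ≤ dt x y := by
            have := hdist y hy x hx
            rwa [hdt.symm y x] at this
          exact mul_le_mul_of_nonneg_right hd (hγnn x y)
        have h2 : ∑ y ∈ G, ∑ x ∈ Gc, dt x y * γ x y
            = ∑ t ∈ Gc ×ˢ G, dt t.1 t.2 * γ t.1 t.2 := by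
          rw [Finset.sum_product]
          exact Finset.sum_comm
        exact (h1.trans_eq h2).trans (hsub _)
      rw [hdiff, abs_sub_le_iff]
      constructor
      · rw [le_div_iff₀ hδpos]
        nlinarith
      · rw [le_div_iff₀ hδpos]
        nlinarith
    -- conclude using W1 = 0
    by_contra hne
    have habs : 0 < |∑ x ∈ G, p x - ∑ y ∈ G, q y| := by
      rw [abs_pos]
      intro h; exact hne (by linarith)
    have hWa := hW a
    have hlt : W1 dt p q < δ * |∑ x ∈ G, p x - ∑ y ∈ G, q y| := by
      rw [hp, hq, hWa]
      exact mul_pos hδpos habs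
    obtain ⟨r, ⟨γ, hγ, rfl⟩, hr⟩ :=
      exists_lt_of_csInf_lt (W1_set_nonempty dt (hP s_i a) (hP s_j a)) hlt
    have hkey := key γ hγ
    have h2 : (∑ x, ∑ y, dt x y * γ x y) / δ < |∑ x ∈ G, p x - ∑ y ∈ G, q y| := by
      rw [div_lt_iff₀ hδpos]
      linarith [hr]
    linarith
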